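/- For every integer d ≥ 1 and every nonempty bounded subset F of ℝ^d, the Vapnik–Chervonenkis dimension of the family 𝓓_d^F of all closed degenerate balls in ℓ∞^d containing F equals ⌊3d/2⌋. -/

import Mathlib

open Set Metric

/-- A family `E` of subsets of `X` shatters a set `σ` if every subset of `σ`
is carved out by some member of `E`. -/
def Shatters {X : Type*} (E : Set (Set X)) (σ : Set X) : Prop :=
  ∀ T ⊆ σ, ∃ C ∈ E, C ∩ σ = T

/-- Vapnik–Chervonenkis dimension: supremum of cardinalities of finite shattered sets. -/
noncomputable def vcDim {X : Type*} (E : Set (Set X)) : ℕ∞ :=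
  ⨆ (σ : Finset X) (_ : Shatters E ↑σ), (σ.card : ℕ∞)

/-- The family of all closed balls in `ℓ∞^d` (sup-norm balls = axis-parallel cubes,
including singletons as balls of radius 0). -/
def Cd (d : ℕ) : Set (Set (Fin d → ℝ)) :=
  {C | ∃ x : Fin d → ℝ, ∃ r : ℝ, 0 ≤ r ∧ C = Metric.closedBall x r}

/-- A closed degenerate ball in `ℓ∞^d`: a product of closed intervals, each of which is
unbounded on at least one side, i.e. of the form `(-∞, b]`, `[a, ∞)` or all of `ℝ`. -/
def IsDegBall {d : ℕ} (C : Set (Fin d → ℝ)) : Prop :=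
  ∃ I : Fin d → Set ℝ,
    (∀ i, (∃ b, I i = Set.Iic b) ∨ (∃ a, I i = Set.Ici a) ∨ I i = Set.univ) ∧
    C = {x | ∀ i, x i ∈ I i}

/-- The family of all closed degenerate balls in `ℓ∞^d`. -/
def Dd (d : ℕ) : Set (Set (Fin d → ℝ)) := {C | IsDegBall C}

/-- The family of closed degenerate balls in `ℓ∞^d` containing the set `F`. -/
def DdF (d : ℕ) (F : Set (Fin d → ℝ)) : Set (Set (Fin d → ℝ)) :=
  {C | IsDegBall C ∧ F ⊆ C}

/-- The family of closed degenerate balls in `ℓ∞^d` containing the origin. -/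
def Dd0 (d : ℕ) : Set (Set (Fin d → ℝ)) := DdF d {0}

namespace VCaux

variable {d : ℕ}

/-- Slot relation: `p` is the strict extreme of `σ` in coordinate `s.1`, on side `s.2`,
strictly beyond the reference point `y₀`. -/
def SlotR (σ : Finset (Fin d → ℝ)) (y₀ : Fin d → ℝ) : Fin d × Bool → (Fin d → ℝ) → Prop
  | (i, true), p => y₀ i < p i ∧ ∀ q ∈ σ, q ≠ p → q i < p i
  | (i, false), p => p i < y₀ i ∧ ∀ q ∈ σ, q ≠ p → p i < q i

lemma slotR_unique {σ : Finset (Fin d → ℝ)} {y₀ : Fin d → ℝ} {s : Fin d × Bool}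
    {p q : Fin d → ℝ} (hp : p ∈ σ) (hq : q ∈ σ)
    (h1 : SlotR σ y₀ s p) (h2 : SlotR σ y₀ s q) : p = q := by
  by_contra hne
  obtain ⟨i, b⟩ := s
  cases b
  · exact lt_asymm (h1.2 q hq (Ne.symm hne)) (h2.2 p hp hne)
  · exact lt_asymm (h1.2 q hq (Ne.symm hne)) (h2.2 p hp hne)

noncomputable def slotSet (σ : Finset (Fin d → ℝ)) (y₀ : Fin d → ℝ) (p : Fin d → ℝ) :
    Finset (Fin d × Bool) :=
  @Finset.filter _ (fun s => SlotR σ y₀ s p) (Classical.decPred _) Finset.univ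

lemma mem_slotSet {σ : Finset (Fin d → ℝ)} {y₀ : Fin d → ℝ} {p : Fin d → ℝ}
    {s : Fin d × Bool} : s ∈ slotSet σ y₀ p ↔ SlotR σ y₀ s p := by
  classical
  simp only [slotSet, Finset.mem_filter, Finset.mem_univ, true_and]

/-- Extract the interval description of a cut given by shattering. -/
lemma exists_cut {F : Set (Fin d → ℝ)} {σ : Finset (Fin d → ℝ)}
    (hsh : Shatters (DdF d F) ↑σ) (T : Set (Fin d → ℝ)) (hT : T ⊆ ↑σ) :
    ∃ I : Fin d → Set ℝ,
      (∀ i, (∃ b, I i = Set.Iic b) ∨ (∃ a, I i = Set.Ici a) ∨ I i = Set.univ) ∧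
      (∀ y ∈ F, ∀ i, y i ∈ I i) ∧ ({x : Fin d → ℝ | ∀ i, x i ∈ I i} ∩ ↑σ = T) := by
  obtain ⟨C, ⟨⟨I, hforms, rfl⟩, hFC⟩, hcap⟩ := hsh T hT
  exact ⟨I, hforms, fun y hy i => (hFC hy) i, hcap⟩

/-- Every point of a shattered set occupies at least one slot. -/
lemma slotSet_nonempty {F : Set (Fin d → ℝ)} {σ : Finset (Fin d → ℝ)} {y₀ : Fin d → ℝ}
    (hy₀ : y₀ ∈ F) (hsh : Shatters (DdF d F) ↑σ) {p : Fin d → ℝ} (hp : p ∈ σ) :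
    (slotSet σ y₀ p).Nonempty := by
  obtain ⟨I, hforms, hyI, hcap⟩ := exists_cut hsh (↑σ \ {p}) diff_subset
  have hpC : ¬ ∀ i, p i ∈ I i := by
    intro h
    have : p ∈ ({x : Fin d → ℝ | ∀ i, x i ∈ I i} ∩ ↑σ) := ⟨h, hp⟩
    rw [hcap] at this
    exact this.2 rfl
  push_neg at hpC
  obtain ⟨i, hi⟩ := hpC
  have hy : y₀ i ∈ I i := hyI y₀ hy₀ i
  have hr : ∀ q ∈ σ, q ≠ p → q i ∈ I i := by
    intro q hq hne
    have : q ∈ ({x : Fin d → ℝ | ∀ i, x i ∈ I i} ∩ ↑σ) := by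
      rw [hcap]; exact ⟨hq, by simp [hne]⟩
    exact this.1 i
  rcases hforms i with ⟨b, hb⟩ | ⟨a, ha⟩ | hu
  · rw [hb] at hi hy hr
    simp only [Set.mem_Iic, not_le] at hi hy hr
    exact ⟨(i, true), mem_slotSet.mpr ⟨lt_of_le_of_lt hy hi,
      fun q hq hne => lt_of_le_of_lt (hr q hq hne) hi⟩⟩
  · rw [ha] at hi hy hr
    simp only [Set.mem_Ici, not_le] at hi hy hr
    exact ⟨(i, false), mem_slotSet.mpr ⟨lt_of_lt_of_le hi hy,
      fun q hq hne => lt_of_lt_of_le hi (hr q hq hne)⟩⟩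
  · rw [hu] at hi; exact absurd (Set.mem_univ _) hi

/-- Tie pair predicate: `p` and `q` are tied strictly beyond everything else (and beyond `y₀`)
in coordinate `s.1`, on side `s.2`. -/
def TieP (σ : Finset (Fin d → ℝ)) (y₀ : Fin d → ℝ) :
    Fin d × Bool → (Fin d → ℝ) → (Fin d → ℝ) → Prop
  | (j, true), p, q => p j = q j ∧ y₀ j < p j ∧ ∀ r ∈ σ, r ≠ p → r ≠ q → r j < p j
  | (j, false), p, q => p j = q j ∧ p j < y₀ j ∧ ∀ r ∈ σ, r ≠ p → r ≠ q → p j < r j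

/-- A tie slot is occupied by nobody. -/
lemma tieP_not_slotR {σ : Finset (Fin d → ℝ)} {y₀ : Fin d → ℝ} {s : Fin d × Bool}
    {p q r : Fin d → ℝ} (htie : TieP σ y₀ s p q) (hp : p ∈ σ) (hq : q ∈ σ)
    (hpq : p ≠ q) (hr : r ∈ σ) : ¬ SlotR σ y₀ s r := by
  intro hs
  obtain ⟨j, b⟩ := s
  cases b
  · obtain ⟨he, _, hbig⟩ := htie
    by_cases h1 : r = p
    · subst h1
      exact absurd he (ne_of_lt (hs.2 q hq (Ne.symm hpq)))
    · by_cases h2 : r = q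
      · subst h2
        exact absurd he.symm (ne_of_lt (hs.2 p hp hpq))
      · exact lt_asymm (hbig r hr h1 h2) (hs.2 p hp (fun hh => h1 hh.symm))
  · obtain ⟨he, _, hbig⟩ := htie
    by_cases h1 : r = p
    · subst h1
      exact absurd he (ne_of_gt (hs.2 q hq (Ne.symm hpq)))
    · by_cases h2 : r = q
      · subst h2
        exact absurd he.symm (ne_of_gt (hs.2 p hp hpq))
      · exact lt_asymm (hbig r hr h1 h2) (hs.2 p hp (fun hh => h1 hh.symm))

/-- Two tie pairs at the same slot coincide as pairs. -/
lemma tieP_pair_mem {σ : Finset (Fin d → ℝ)} {y₀ : Fin d → ℝ} {s : Fin d × Bool}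
    {p q p' q' : Fin d → ℝ} (h : TieP σ y₀ s p q) (h' : TieP σ y₀ s p' q')
    (hp' : p' ∈ σ) (hp : p ∈ σ) : p' = p ∨ p' = q := by
  by_contra hcon
  push_neg at hcon
  obtain ⟨h1, h2⟩ := hcon
  obtain ⟨j, b⟩ := s
  cases b
  · -- false side
    have hlt : p j < p' j := h.2.2 p' hp' h1 h2
    by_cases h3 : p = p'
    · exact absurd hlt (by rw [h3]; exact lt_irrefl _)
    · by_cases h4 : p = q'
      · have : p' j = p j := by rw [h'.1, ← h4]
        exact absurd hlt (by rw [this]; exact lt_irrefl _)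
      · exact lt_asymm hlt (h'.2.2 p hp h3 h4)
  · have hlt : p' j < p j := h.2.2 p' hp' h1 h2
    by_cases h3 : p = p'
    · exact absurd hlt (by rw [h3]; exact lt_irrefl _)
    · by_cases h4 : p = q'
      · have : p' j = p j := by rw [h'.1, ← h4]
        exact absurd hlt (by rw [this]; exact lt_irrefl _)
      · exact lt_asymm hlt (h'.2.2 p hp h3 h4)

/-- The key tie lemma. -/
lemma tie_exists {F : Set (Fin d → ℝ)} {σ : Finset (Fin d → ℝ)} {y₀ : Fin d → ℝ}
    (hy₀ : y₀ ∈ F) (hsh : Shatters (DdF d F) ↑σ) {p q : Fin d → ℝ}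
    (hp : p ∈ σ) (hq : q ∈ σ) {i : Fin d}
    (hAp : slotSet σ y₀ p = {(i, true)}) (hAq : slotSet σ y₀ q = {(i, false)}) :
    ∃ s, TieP σ y₀ s p q := by
  have hSp : SlotR σ y₀ (i, true) p := mem_slotSet.mp (hAp ▸ Finset.mem_singleton_self _)
  have hSq : SlotR σ y₀ (i, false) q := mem_slotSet.mp (hAq ▸ Finset.mem_singleton_self _)
  have hpq : p ≠ q := by
    intro h
    rw [h, hAq] at hAp
    have := Finset.singleton_injective hAp
    simp at this
  obtain ⟨I, hforms, hyI, hcap⟩ := exists_cut hsh (↑σ \ {p, q}) diff_subset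
  have hmemC : ∀ r ∈ σ, r ≠ p → r ≠ q → ∀ j, r j ∈ I j := by
    intro r hr h1 h2 j
    have : r ∈ ({x : Fin d → ℝ | ∀ i, x i ∈ I i} ∩ ↑σ) := by
      rw [hcap]; exact ⟨hr, by simp [h1, h2]⟩
    exact this.1 j
  have hy : ∀ j, y₀ j ∈ I j := hyI y₀ hy₀
  have hnotC : ∀ r ∈ σ, (r = p ∨ r = q) → ∃ j, r j ∉ I j := by
    intro r hr hor
    by_contra hcon
    push_neg at hcon
    have : r ∈ ({x : Fin d → ℝ | ∀ i, x i ∈ I i} ∩ ↑σ) := ⟨hcon, hr⟩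
    rw [hcap] at this
    rcases hor with h | h <;> exact this.2 (by simp [h])
  -- there is a coordinate where both p and q are excluded
  have hboth : ∃ j, p j ∉ I j ∧ q j ∉ I j := by
    by_contra hno
    push_neg at hno
    obtain ⟨jp, hjp⟩ := hnotC p hp (Or.inl rfl)
    obtain ⟨jq, hjq⟩ := hnotC q hq (Or.inr rfl)
    have hqin : q jp ∈ I jp := hno jp hjp
    -- analyze jp
    have hjpfact : jp = i ∧ ∃ b, I jp = Set.Iic b := by
      rcases hforms jp with ⟨b, hb⟩ | ⟨a, ha⟩ | hu
      · rw [hb] at hjp hqin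
        simp only [Set.mem_Iic, not_le] at hjp hqin
        have hslot : SlotR σ y₀ (jp, true) p := by
          refine ⟨lt_of_le_of_lt ?_ hjp, fun r hr hne => ?_⟩
          · have := hy jp; rw [hb] at this; exact this
          · by_cases h2 : r = q
            · subst h2; exact lt_of_le_of_lt hqin hjp
            · have := hmemC r hr hne h2 jp
              rw [hb] at this
              exact lt_of_le_of_lt this hjp
        have : (jp, true) ∈ slotSet σ y₀ p := mem_slotSet.mpr hslot
        rw [hAp, Finset.mem_singleton] at this
        exact ⟨(Prod.mk.injEq _ _ _ _ ▸ this).1, ⟨b, hb⟩⟩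
      · rw [ha] at hjp
        simp only [Set.mem_Ici, not_le] at hjp
        have hslot : SlotR σ y₀ (jp, false) p := by
          refine ⟨lt_of_lt_of_le hjp ?_, fun r hr hne => ?_⟩
          · have := hy jp; rw [ha] at this; exact this
          · by_cases h2 : r = q
            · subst h2
              rw [ha] at hqin
              exact lt_of_lt_of_le hjp hqin
            · have := hmemC r hr hne h2 jp
              rw [ha] at this
              exact lt_of_lt_of_le hjp this
        have : (jp, false) ∈ slotSet σ y₀ p := mem_slotSet.mpr hslot
        rw [hAp, Finset.mem_singleton] at this
        simp at this
      · rw [hu] at hjp; exact absurd (Set.mem_univ _) hjp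
    -- analyze jq
    have hpin : p jq ∈ I jq := by
      by_contra hcon2
      exact hjq (hno jq hcon2)
    have hjqfact : jq = i ∧ ∃ a, I jq = Set.Ici a := by
      rcases hforms jq with ⟨b, hb⟩ | ⟨a, ha⟩ | hu
      · rw [hb] at hjq
        simp only [Set.mem_Iic, not_le] at hjq
        have hslot : SlotR σ y₀ (jq, true) q := by
          refine ⟨lt_of_le_of_lt ?_ hjq, fun r hr hne => ?_⟩
          · have := hy jq; rw [hb] at this; exact this
          · by_cases h2 : r = p
            · subst h2
              rw [hb] at hpin
              exact lt_of_le_of_lt hpin hjq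
            · have := hmemC r hr h2 hne jq
              rw [hb] at this
              exact lt_of_le_of_lt this hjq
        have : (jq, true) ∈ slotSet σ y₀ q := mem_slotSet.mpr hslot
        rw [hAq, Finset.mem_singleton] at this
        simp at this
      · rw [ha] at hjq
        simp only [Set.mem_Ici, not_le] at hjq
        have hslot : SlotR σ y₀ (jq, false) q := by
          refine ⟨lt_of_lt_of_le hjq ?_, fun r hr hne => ?_⟩
          · have := hy jq; rw [ha] at this; exact this
          · by_cases h2 : r = p
            · subst h2
              rw [ha] at hpin
              exact lt_of_lt_of_le hjq hpin
            · have := hmemC r hr h2 hne jq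
              rw [ha] at this
              exact lt_of_lt_of_le hjq this
        have : (jq, false) ∈ slotSet σ y₀ q := mem_slotSet.mpr hslot
        rw [hAq, Finset.mem_singleton] at this
        exact ⟨(Prod.mk.injEq _ _ _ _ ▸ this).1, ⟨a, ha⟩⟩
      · rw [hu] at hjq; exact absurd (Set.mem_univ _) hjq
    obtain ⟨hjp_i, b, hb⟩ := hjpfact
    obtain ⟨hjq_i, a, ha⟩ := hjqfact
    rw [hjp_i] at hb
    rw [hjq_i] at ha
    rw [hb] at ha
    have h1 : max a (b + 1) ∈ Set.Ici a := Set.mem_Ici.mpr (le_max_left _ _)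
    rw [← ha] at h1
    have h2 : (b : ℝ) + 1 ≤ max a (b + 1) := le_max_right _ _
    have h3 : max a (b + 1) ≤ b := h1
    linarith
  obtain ⟨j, hpj, hqj⟩ := hboth
  rcases hforms j with ⟨b, hb⟩ | ⟨a, ha⟩ | hu
  · rw [hb] at hpj hqj
    simp only [Set.mem_Iic, not_le] at hpj hqj
    have hyj : y₀ j ≤ b := by have := hy j; rw [hb] at this; exact this
    have hrj : ∀ r ∈ σ, r ≠ p → r ≠ q → r j ≤ b := by
      intro r hr h1 h2
      have := hmemC r hr h1 h2 j; rw [hb] at this; exact this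
    rcases lt_trichotomy (p j) (q j) with hlt | heq | hgt
    · -- q would be strict max: contradiction with A q = {(i,false)}
      have hslot : SlotR σ y₀ (j, true) q := by
        refine ⟨lt_of_le_of_lt hyj hqj, fun r hr hne => ?_⟩
        by_cases h2 : r = p
        · subst h2; exact hlt
        · exact lt_of_le_of_lt (hrj r hr h2 hne) hqj
      have : (j, true) ∈ slotSet σ y₀ q := mem_slotSet.mpr hslot
      rw [hAq, Finset.mem_singleton] at this
      simp at this
    · exact ⟨(j, true), heq, lt_of_le_of_lt hyj hpj,
        fun r hr h1 h2 => lt_of_le_of_lt (hrj r hr h1 h2) hpj⟩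
    · -- p strict max at j, so j = i; but then q i > b ≥ y₀ i contradicts q's slot
      have hslot : SlotR σ y₀ (j, true) p := by
        refine ⟨lt_of_le_of_lt hyj hpj, fun r hr hne => ?_⟩
        by_cases h2 : r = q
        · subst h2; exact hgt
        · exact lt_of_le_of_lt (hrj r hr hne h2) hpj
      have hji : (j, true) ∈ slotSet σ y₀ p := mem_slotSet.mpr hslot
      rw [hAp, Finset.mem_singleton] at hji
      have hj_eq : j = i := (Prod.mk.injEq _ _ _ _ ▸ hji).1
      have : q i < y₀ i := hSq.1
      rw [← hj_eq] at this
      linarith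
  · rw [ha] at hpj hqj
    simp only [Set.mem_Ici, not_le] at hpj hqj
    have hyj : a ≤ y₀ j := by have := hy j; rw [ha] at this; exact this
    have hrj : ∀ r ∈ σ, r ≠ p → r ≠ q → a ≤ r j := by
      intro r hr h1 h2
      have := hmemC r hr h1 h2 j; rw [ha] at this; exact this
    rcases lt_trichotomy (p j) (q j) with hlt | heq | hgt
    · have hslot : SlotR σ y₀ (j, false) p := by
        refine ⟨lt_of_lt_of_le hpj hyj, fun r hr hne => ?_⟩
        by_cases h2 : r = q
        · subst h2; exact hlt
        · exact lt_of_lt_of_le hpj (hrj r hr hne h2)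
      have hji : (j, false) ∈ slotSet σ y₀ p := mem_slotSet.mpr hslot
      rw [hAp, Finset.mem_singleton] at hji
      simp at hji
    · exact ⟨(j, false), heq, lt_of_lt_of_le hpj hyj,
        fun r hr h1 h2 => lt_of_lt_of_le hpj (hrj r hr h1 h2)⟩
    · -- q strict min at j, so j = i via A q... q slot is (i,false): j = i
      have hslot : SlotR σ y₀ (j, false) q := by
        refine ⟨lt_of_lt_of_le hqj hyj, fun r hr hne => ?_⟩
        by_cases h2 : r = p
        · subst h2; exact hgt
        · exact lt_of_lt_of_le hqj (hrj r hr h2 hne)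
      have hji : (j, false) ∈ slotSet σ y₀ q := mem_slotSet.mpr hslot
      rw [hAq, Finset.mem_singleton] at hji
      have hj_eq : j = i := (Prod.mk.injEq _ _ _ _ ▸ hji).1
      have : y₀ i < p i := hSp.1
      rw [← hj_eq] at this
      linarith
  · rw [hu] at hpj; exact absurd (Set.mem_univ _) hpj


/-- The counting argument: a shattered set has at most `3d/2` points. -/
lemma count_main {F : Set (Fin d → ℝ)} {σ : Finset (Fin d → ℝ)} {y₀ : Fin d → ℝ}
    (hy₀ : y₀ ∈ F) (hsh : Shatters (DdF d F) ↑σ) : 2 * σ.card ≤ 3 * d := by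
  classical
  set A : (Fin d → ℝ) → Finset (Fin d × Bool) := slotSet σ y₀ with hA
  -- pairwise disjointness of slot sets
  have hdisj : ∀ x ∈ σ, ∀ y ∈ σ, x ≠ y → Disjoint (A x) (A y) := by
    intro x hx y hy hxy
    rw [Finset.disjoint_left]
    intro s hsx hsy
    exact hxy (slotR_unique hx hy (mem_slotSet.mp hsx) (mem_slotSet.mp hsy))
  set W : Finset (Fin d × Bool) := σ.biUnion A with hW
  have hcardW : W.card = ∑ p ∈ σ, (A p).card := Finset.card_biUnion hdisj
  -- the doubly-solo coordinates
  set Dbl : Finset (Fin d) := Finset.univ.filter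
    (fun i => ∃ p ∈ σ, ∃ q ∈ σ, A p = {(i, true)} ∧ A q = {(i, false)}) with hDbl
  -- choose tie slots
  have htie : ∀ i ∈ Dbl, ∃ s : Fin d × Bool, ∃ p q : Fin d → ℝ, p ∈ σ ∧ q ∈ σ ∧ p ≠ q ∧
      A p = {(i, true)} ∧ A q = {(i, false)} ∧ TieP σ y₀ s p q := by
    intro i hi
    rw [hDbl, Finset.mem_filter] at hi
    obtain ⟨-, p, hp, q, hq, hAp, hAq⟩ := hi
    obtain ⟨s, hs⟩ := tie_exists hy₀ hsh hp hq hAp hAq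
    have hpq : p ≠ q := by
      intro h
      rw [h, hAq] at hAp
      have := Finset.singleton_injective hAp
      simp at this
    exact ⟨s, p, q, hp, hq, hpq, hAp, hAq, hs⟩
  choose t tp tq htp htq htpq htAp htAq htT using htie
  set Tie : Finset (Fin d × Bool) := Dbl.attach.image (fun x => t x.1 x.2) with hTie
  -- tie slots are distinct
  have htinj : ∀ (x : {a // a ∈ Dbl}) (y : {a // a ∈ Dbl}),
      t x.1 x.2 = t y.1 y.2 → x = y := by
    rintro ⟨i, hi⟩ ⟨i', hi'⟩ heq
    have h1 := htT i hi
    have h2 := htT i' hi'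
    rw [heq] at h1
    have hmem := tieP_pair_mem h1 h2 (htp i' hi') (htp i hi)
    rcases hmem with h | h
    · have e1 := htAp i' hi'
      rw [h, htAp i hi] at e1
      have := Finset.singleton_injective e1
      simp only [Prod.mk.injEq] at this
      exact Subtype.ext this.1
    · have e1 := htAp i' hi'
      rw [h, htAq i hi] at e1
      have := Finset.singleton_injective e1
      simp at this
  have hcardTie : Tie.card = Dbl.card := by
    rw [hTie, Finset.card_image_of_injective _ (fun x y h => htinj x y h),
      Finset.card_attach]
  -- Tie is disjoint from W
  have hWTie : Disjoint W Tie := by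
    rw [Finset.disjoint_left]
    intro s hsW hsTie
    rw [hTie, Finset.mem_image] at hsTie
    obtain ⟨⟨i, hi⟩, -, rfl⟩ := hsTie
    rw [hW, Finset.mem_biUnion] at hsW
    obtain ⟨r, hr, hsr⟩ := hsW
    exact tieP_not_slotR (htT i hi) (htp i hi) (htq i hi) (htpq i hi) hr
      (mem_slotSet.mp hsr)
  -- (1): total slot count
  have h1 : (∑ p ∈ σ, (A p).card) + Dbl.card ≤ 2 * d := by
    have := Finset.card_le_card (Finset.subset_univ (W ∪ Tie))
    rw [Finset.card_union_of_disjoint hWTie, hcardW, hcardTie] at this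
    simpa [Fintype.card_prod, mul_comm] using this
  -- solo points
  set Solo : Finset (Fin d → ℝ) := σ.filter (fun p => (A p).card = 1) with hSolo
  -- (2): 2 * n ≤ sum + k
  have h2 : 2 * σ.card ≤ (∑ p ∈ σ, (A p).card) + Solo.card := by
    have : ∀ p ∈ σ, 2 ≤ (A p).card + (if (A p).card = 1 then 1 else 0) := by
      intro p hp
      have hne : 1 ≤ (A p).card := Finset.card_pos.mpr (slotSet_nonempty hy₀ hsh hp)
      by_cases h : (A p).card = 1
      · simp [h]
      · have : 2 ≤ (A p).card := by omega
        omega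
    calc 2 * σ.card = ∑ _p ∈ σ, 2 := by rw [Finset.sum_const, smul_eq_mul, mul_comm]
      _ ≤ ∑ p ∈ σ, ((A p).card + (if (A p).card = 1 then 1 else 0)) :=
          Finset.sum_le_sum this
      _ = (∑ p ∈ σ, (A p).card) + Solo.card := by
          rw [Finset.sum_add_distrib, hSolo, Finset.card_filter]
  -- the injection from solo points to slots
  have hchoice : ∀ p ∈ Solo, ∃ s, A p = {s} := by
    intro p hp
    rw [hSolo, Finset.mem_filter] at hp
    exact Finset.card_eq_one.mp hp.2
  choose g hg using hchoice
  -- (3): k ≤ d + Dbl.card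
  have h3 : Solo.card ≤ d + Dbl.card := by
    have hmaps : ∀ (x : {a // a ∈ Solo}), (fun x : {a // a ∈ Solo} => g x.1 x.2) x ∈
        (Finset.univ : Finset (Fin d × Bool)) := fun _ => Finset.mem_univ _
    have hσ : ∀ p ∈ Solo, p ∈ σ := by
      intro p hp; rw [hSolo, Finset.mem_filter] at hp; exact hp.1
    have hginj : ∀ (x y : {a // a ∈ Solo}), g x.1 x.2 = g y.1 y.2 → x = y := by
      rintro ⟨p, hp⟩ ⟨p', hp'⟩ heq
      have h1 : g p hp ∈ A p := by rw [hg p hp]; exact Finset.mem_singleton_self _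
      have h2 : g p' hp' ∈ A p' := by rw [hg p' hp']; exact Finset.mem_singleton_self _
      rw [heq] at h1
      exact Subtype.ext (slotR_unique (hσ p hp) (hσ p' hp')
        (mem_slotSet.mp h1) (mem_slotSet.mp h2))
    -- image of solos under g
    set Gim : Finset (Fin d × Bool) := Solo.attach.image (fun x => g x.1 x.2) with hGim
    have hcardG : Gim.card = Solo.card := by
      rw [hGim, Finset.card_image_of_injective _ (fun x y h => hginj x y h),
        Finset.card_attach]
    -- fiberwise count
    have hfib : Gim.card = ∑ i : Fin d, (Gim.filter (fun s => s.1 = i)).card :=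
      Finset.card_eq_sum_card_fiberwise (fun x _ => Finset.mem_univ x.1)
    have hfible : ∀ i : Fin d, (Gim.filter (fun s => s.1 = i)).card ≤
        1 + (if i ∈ Dbl then 1 else 0) := by
      intro i
      by_cases hi : i ∈ Dbl
      · have : Gim.filter (fun s => s.1 = i) ⊆ {(i, true), (i, false)} := by
          intro s hs
          rw [Finset.mem_filter] at hs
          obtain ⟨-, h⟩ := hs
          rcases s with ⟨j, b⟩
          simp only at h
          subst h
          cases b <;> simp
        have := Finset.card_le_card this
        have h2 : ({(i, true), (i, false)} : Finset (Fin d × Bool)).card ≤ 2 :=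
          Finset.card_insert_le _ _ |>.trans (by simp)
        simp [hi]
        omega
      · -- fiber has at most one element, otherwise i ∈ Dbl
        have hgoal : (Gim.filter (fun s => s.1 = i)).card ≤ 1 := by
          rw [Finset.card_le_one]
          intro s hs s' hs'
          rw [Finset.mem_filter] at hs hs'
          obtain ⟨hs1, hs2⟩ := hs
          obtain ⟨hs'1, hs'2⟩ := hs'
          by_contra hne
          -- s ≠ s', both have first coord i: so {(i,true),(i,false)} ⊆ Gim
          have hbt : ((i, true) ∈ Gim ∧ (i, false) ∈ Gim) := by
            rcases s with ⟨j, b⟩; rcases s' with ⟨j', b'⟩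
            simp only at hs2 hs'2
            subst hs2; subst hs'2
            cases b <;> cases b'
            · simp at hne
            · exact ⟨hs'1, hs1⟩
            · exact ⟨hs1, hs'1⟩
            · simp at hne
          apply hi
          rw [hDbl, Finset.mem_filter]
          refine ⟨Finset.mem_univ _, ?_⟩
          obtain ⟨hT, hF⟩ := hbt
          rw [hGim, Finset.mem_image] at hT hF
          obtain ⟨⟨p, hp⟩, -, hpe⟩ := hT
          obtain ⟨⟨q, hq⟩, -, hqe⟩ := hF
          refine ⟨p, hσ p hp, q, hσ q hq, ?_, ?_⟩
          · rw [← hpe]; exact hg p hp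
          · rw [← hqe]; exact hg q hq
        simp [hi]
        omega
    calc Solo.card = Gim.card := hcardG.symm
      _ = ∑ i : Fin d, (Gim.filter (fun s => s.1 = i)).card := hfib
      _ ≤ ∑ i : Fin d, (1 + (if i ∈ Dbl then 1 else 0)) := Finset.sum_le_sum
          (fun i _ => hfible i)
      _ = d + Dbl.card := by
          rw [Finset.sum_add_distrib]
          congr 1
          · simp
          · rw [← Finset.card_filter]
            congr 1
            ext i
            simp
  omega

def Itab1 (m1 M1 : ℝ) : Bool → Bool → Bool → Set ℝ
  | false, false, false => Set.univ
  | true,  false, false => Set.Iic (M1+1)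
  | false, true,  false => Set.Ici (m1 - 3/4)
  | false, false, true  => Set.univ
  | true,  true,  false => Set.univ
  | true,  false, true  => Set.Iic (M1+1)
  | false, true,  true  => Set.Ici m1
  | true,  true,  true  => Set.Ici m1

def Itab2 (m2 M2 : ℝ) : Bool → Bool → Bool → Set ℝ
  | false, false, false => Set.univ
  | true,  false, false => Set.univ
  | false, true,  false => Set.univ
  | false, false, true  => Set.Ici m2
  | true,  true,  false => Set.Iic M2
  | true,  false, true  => Set.Ici m2
  | false, true,  true  => Set.univ
  | true,  true,  true  => Set.Iic M2

lemma Itab1_form (m1 M1 : ℝ) (e0 e1 e2 : Bool) :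
    (∃ b, Itab1 m1 M1 e0 e1 e2 = Set.Iic b) ∨ (∃ a, Itab1 m1 M1 e0 e1 e2 = Set.Ici a) ∨
    Itab1 m1 M1 e0 e1 e2 = Set.univ := by
  cases e0 <;> cases e1 <;> cases e2 <;>
    first
      | exact Or.inl ⟨_, rfl⟩
      | exact Or.inr (Or.inl ⟨_, rfl⟩)
      | exact Or.inr (Or.inr rfl)

lemma Itab2_form (m2 M2 : ℝ) (e0 e1 e2 : Bool) :
    (∃ b, Itab2 m2 M2 e0 e1 e2 = Set.Iic b) ∨ (∃ a, Itab2 m2 M2 e0 e1 e2 = Set.Ici a) ∨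
    Itab2 m2 M2 e0 e1 e2 = Set.univ := by
  cases e0 <;> cases e1 <;> cases e2 <;>
    first
      | exact Or.inl ⟨_, rfl⟩
      | exact Or.inr (Or.inl ⟨_, rfl⟩)
      | exact Or.inr (Or.inr rfl)

lemma Itab1_Icc {m1 M1 : ℝ} (h : m1 ≤ M1) (e0 e1 e2 : Bool) {v : ℝ}
    (h1 : m1 ≤ v) (h2 : v ≤ M1) : v ∈ Itab1 m1 M1 e0 e1 e2 := by
  cases e0 <;> cases e1 <;> cases e2 <;>
    simp only [Itab1, Set.mem_Iic, Set.mem_Ici, Set.mem_univ] <;> first | trivial | linarith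

lemma Itab2_Icc {m2 M2 : ℝ} (h : m2 ≤ M2) (e0 e1 e2 : Bool) {v : ℝ}
    (h1 : m2 ≤ v) (h2 : v ≤ M2) : v ∈ Itab2 m2 M2 e0 e1 e2 := by
  cases e0 <;> cases e1 <;> cases e2 <;>
    simp only [Itab2, Set.mem_Iic, Set.mem_Ici, Set.mem_univ] <;> first | trivial | linarith

/-- The key real-arithmetic fact about the gadget tables. -/
lemma core_full {m1 M1 m2 M2 : ℝ} (h1 : m1 ≤ M1) (h2 : m2 ≤ M2) (e0 e1 e2 : Bool) :
    ((M1+2 ∈ Itab1 m1 M1 e0 e1 e2 ∧ M2+1 ∈ Itab2 m2 M2 e0 e1 e2) ↔ e0 = false)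
    ∧ ((m1-1 ∈ Itab1 m1 M1 e0 e1 e2 ∧ M2+1 ∈ Itab2 m2 M2 e0 e1 e2) ↔ e1 = false)
    ∧ ((m1-(1:ℝ)/2 ∈ Itab1 m1 M1 e0 e1 e2 ∧ m2-1 ∈ Itab2 m2 M2 e0 e1 e2) ↔ e2 = false) := by
  cases e0 <;> cases e1 <;> cases e2 <;>
    simp only [Itab1, Itab2, Set.mem_Iic, Set.mem_Ici, Set.mem_univ, true_and, and_true,
      iff_true, iff_false, not_and, not_le, and_iff_left_iff_imp, and_iff_right_iff_imp] <;>
    refine ⟨?_, ?_, ?_⟩ <;> first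
      | rfl
      | (simp; done)
      | linarith
      | (constructor <;> linarith)
      | (intro h; linarith)
      | (constructor <;> intro h <;> first | linarith | simp_all)

lemma core_half {m1 M1 : ℝ} (h : m1 ≤ M1) (e0 : Bool) :
    (M1+2 ∈ Itab1 m1 M1 e0 false false) ↔ e0 = false := by
  cases e0
  · simp [Itab1]
  · simp only [Itab1, Set.mem_Iic]
    constructor
    · intro hh; exact absurd hh (by linarith)
    · intro hh; exact Bool.noConfusion hh

/-- The points of the lower-bound construction. -/
noncomputable def lpt (m M : Fin d → ℝ) (k j : ℕ) : Fin d → ℝ := fun i =>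
  if (i : ℕ) = 2*k then (if j = 0 then M i + 2 else if j = 1 then m i - 1 else m i - 1/2)
  else if (i : ℕ) = 2*k+1 then (if j = 2 then m i - 1 else M i + 1)
  else m i

def lK (d : ℕ) : Finset (ℕ × ℕ) :=
  ((Finset.range (d/2)) ×ˢ (Finset.range 3)) ∪
    (if d % 2 = 1 then {(d/2, 0)} else ∅)

lemma mem_lK {k j : ℕ} : (k, j) ∈ lK d ↔ (k < d/2 ∧ j < 3) ∨ (d % 2 = 1 ∧ k = d/2 ∧ j = 0) := by
  unfold lK
  by_cases h : d % 2 = 1 <;>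
    simp [h, Finset.mem_union, Finset.mem_product, Finset.mem_range, Prod.ext_iff] <;> tauto

lemma lK_facts {k j : ℕ} (h : (k, j) ∈ lK d) :
    2*k < d ∧ j < 3 ∧ (2*k+1 < d ∨ j = 0) := by
  rw [mem_lK] at h
  omega

lemma lK_card : (lK d).card = 3*d/2 := by
  unfold lK
  have hdis : Disjoint ((Finset.range (d/2)) ×ˢ (Finset.range 3))
      (if d % 2 = 1 then ({(d/2, 0)} : Finset (ℕ × ℕ)) else ∅) := by
    by_cases h : d % 2 = 1 <;> simp [h, Finset.disjoint_left] <;> omega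
  rw [Finset.card_union_of_disjoint hdis, Finset.card_product, Finset.card_range,
    Finset.card_range]
  by_cases h : d % 2 = 1 <;> simp [h] <;> omega

lemma lpt_at1 (m M : Fin d → ℝ) (k j : ℕ) (h2k : 2*k < d) :
    lpt m M k j ⟨2*k, h2k⟩ = (if j = 0 then M ⟨2*k, h2k⟩ + 2
      else if j = 1 then m ⟨2*k, h2k⟩ - 1 else m ⟨2*k, h2k⟩ - 1/2) := by
  simp only [lpt]
  rw [if_pos trivial]

lemma lpt_at2 (m M : Fin d → ℝ) (k j : ℕ) (hfull : 2*k+1 < d) :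
    lpt m M k j ⟨2*k+1, hfull⟩ =
      (if j = 2 then m ⟨2*k+1, hfull⟩ - 1 else M ⟨2*k+1, hfull⟩ + 1) := by
  simp only [lpt]
  rw [if_neg (by omega : ¬ (2*k+1 = 2*k)), if_pos trivial]

lemma lpt_other (m M : Fin d → ℝ) (k j : ℕ) (i : Fin d)
    (h1 : ¬ ((i:ℕ) = 2*k)) (h2 : ¬ ((i:ℕ) = 2*k+1)) : lpt m M k j i = m i := by
  simp only [lpt]
  rw [if_neg h1, if_neg h2]

lemma lpt_injOn (m M : Fin d → ℝ) (hmM : ∀ i, m i ≤ M i) :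
    Set.InjOn (fun kj : ℕ × ℕ => lpt m M kj.1 kj.2) ↑(lK d) := by
  rintro ⟨k, j⟩ hx ⟨k', j'⟩ hy heq
  simp only [Finset.mem_coe] at hx hy
  obtain ⟨h2k, hj3, -⟩ := lK_facts hx
  obtain ⟨h2k', hj3', -⟩ := lK_facts hy
  simp only at heq
  have hmm := hmM (⟨2*k, h2k⟩ : Fin d)
  have hkk : k = k' := by
    by_contra hne
    have e := congrFun heq (⟨2*k, h2k⟩ : Fin d)
    rw [lpt_at1 m M k j h2k, lpt_other m M k' j' _ (by simp; omega) (by simp; omega)] at e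
    interval_cases j <;> norm_num at e <;> linarith
  subst hkk
  have e := congrFun heq (⟨2*k, h2k⟩ : Fin d)
  rw [lpt_at1 m M k j h2k, lpt_at1 m M k j' h2k] at e
  have hjj : j = j' := by
    interval_cases j <;> interval_cases j' <;> norm_num at e <;> first | rfl | linarith
  rw [hjj]

/-- The lower bound: the construction is shattered. -/
theorem lb_shatters (m M : Fin d → ℝ) (F : Set (Fin d → ℝ))
    (hf1 : ∀ y ∈ F, ∀ i, m i ≤ y i) (hf2 : ∀ y ∈ F, ∀ i, y i ≤ M i)
    (hmM : ∀ i, m i ≤ M i) :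
    Shatters (DdF d F) ↑((lK d).image (fun kj : ℕ × ℕ => lpt m M kj.1 kj.2)) := by
  classical
  intro T hT
  set ex : ℕ → ℕ → Bool := fun k j =>
    if (2*k+1 < d ∨ j = 0) ∧ lpt m M k j ∉ T then true else false with hex
  set I : Fin d → Set ℝ := fun i =>
    if (i : ℕ) % 2 = 0 then
      Itab1 (m i) (M i) (ex ((i:ℕ)/2) 0) (ex ((i:ℕ)/2) 1) (ex ((i:ℕ)/2) 2)
    else Itab2 (m i) (M i) (ex ((i:ℕ)/2) 0) (ex ((i:ℕ)/2) 1) (ex ((i:ℕ)/2) 2) with hI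
  have hIform : ∀ i, (∃ b, I i = Set.Iic b) ∨ (∃ a, I i = Set.Ici a) ∨ I i = Set.univ := by
    intro i
    simp only [hI]
    by_cases h : (i:ℕ) % 2 = 0
    · rw [if_pos h]; exact Itab1_form _ _ _ _ _
    · rw [if_neg h]; exact Itab2_form _ _ _ _ _
  have hIcc : ∀ i, ∀ v : ℝ, m i ≤ v → v ≤ M i → v ∈ I i := by
    intro i v h1 h2
    simp only [hI]
    by_cases h : (i:ℕ) % 2 = 0
    · rw [if_pos h]; exact Itab1_Icc (hmM i) _ _ _ h1 h2
    · rw [if_neg h]; exact Itab2_Icc (hmM i) _ _ _ h1 h2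
  -- basic computations
  have hI1 : ∀ k : ℕ, ∀ h2k : 2*k < d,
      I ⟨2*k, h2k⟩ = Itab1 (m ⟨2*k, h2k⟩) (M ⟨2*k, h2k⟩) (ex k 0) (ex k 1) (ex k 2) := by
    intro k h2k
    simp only [hI]
    have h1 : (((⟨2*k, h2k⟩ : Fin d) : ℕ)) % 2 = 0 := by simp [Nat.mul_mod_right]
    have h2 : (((⟨2*k, h2k⟩ : Fin d) : ℕ)) / 2 = k := by simp [Nat.mul_div_cancel_left]
    rw [if_pos h1, h2]
  have hI2 : ∀ k : ℕ, ∀ hfull : 2*k+1 < d,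
      I ⟨2*k+1, hfull⟩ = Itab2 (m ⟨2*k+1, hfull⟩) (M ⟨2*k+1, hfull⟩)
        (ex k 0) (ex k 1) (ex k 2) := by
    intro k hfull
    simp only [hI]
    have h1 : ¬ ((((⟨2*k+1, hfull⟩ : Fin d) : ℕ)) % 2 = 0) := by simp [Nat.add_mul_mod_self_left]
    have h2 : (((⟨2*k+1, hfull⟩ : Fin d) : ℕ)) / 2 = k := by simp; omega
    rw [if_neg h1, h2]
  refine ⟨{x | ∀ i, x i ∈ I i}, ⟨⟨I, hIform, rfl⟩, ?_⟩, ?_⟩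
  · intro y hy
    exact fun i => hIcc i (y i) (hf1 y hy i) (hf2 y hy i)
  · apply Set.eq_of_subset_of_subset
    · -- C ∩ σ ⊆ T
      rintro x ⟨hxC, hxσ⟩
      simp only [Finset.coe_image, Set.mem_image, Finset.mem_coe] at hxσ
      obtain ⟨⟨k, j⟩, hkj, rfl⟩ := hxσ
      obtain ⟨h2k, hj3, hor⟩ := lK_facts hkj
      by_contra hxT
      have hexT : ex k j = true := by rw [hex]; simp only; rw [if_pos ⟨hor, hxT⟩]
      by_cases hfull : 2*k+1 < d
      · have hc1 := hxC ⟨2*k, h2k⟩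
        have hc2 := hxC ⟨2*k+1, hfull⟩
        rw [hI1 k h2k, lpt_at1 m M k j h2k] at hc1
        rw [hI2 k hfull, lpt_at2 m M k j hfull] at hc2
        have hcore := core_full (hmM ⟨2*k, h2k⟩) (hmM ⟨2*k+1, hfull⟩)
          (ex k 0) (ex k 1) (ex k 2)
        interval_cases j
        · simp only [if_pos rfl] at hc1
          rw [if_neg (by omega : ¬ (0 = 2))] at hc2
          have := hcore.1.mp ⟨hc1, hc2⟩
          rw [hexT] at this; exact Bool.noConfusion this
        · rw [if_neg (by omega : ¬ (1 = 0)), if_pos rfl] at hc1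
          rw [if_neg (by omega : ¬ (1 = 2))] at hc2
          have := hcore.2.1.mp ⟨hc1, hc2⟩
          rw [hexT] at this; exact Bool.noConfusion this
        · rw [if_neg (by omega : ¬ (2 = 0)), if_neg (by omega : ¬ (2 = 1))] at hc1
          rw [if_pos rfl] at hc2
          have := hcore.2.2.mp ⟨hc1, hc2⟩
          rw [hexT] at this; exact Bool.noConfusion this
      · have hj0 : j = 0 := by omega
        subst hj0
        have hc1 := hxC ⟨2*k, h2k⟩
        rw [hI1 k h2k, lpt_at1 m M k 0 h2k, if_pos rfl] at hc1
        have he1 : ex k 1 = false := by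
          simp only [hex]; rw [if_neg]; rintro ⟨h, -⟩; omega
        have he2 : ex k 2 = false := by
          simp only [hex]; rw [if_neg]; rintro ⟨h, -⟩; omega
        rw [he1, he2] at hc1
        have := (core_half (hmM ⟨2*k, h2k⟩) (ex k 0)).mp hc1
        rw [hexT] at this; exact Bool.noConfusion this
    · -- T ⊆ C ∩ σ
      intro x hxT
      have hxσ := hT hxT
      refine ⟨?_, hxσ⟩
      simp only [Finset.coe_image, Set.mem_image, Finset.mem_coe] at hxσ
      obtain ⟨⟨k, j⟩, hkj, rfl⟩ := hxσ
      obtain ⟨h2k, hj3, hor⟩ := lK_facts hkj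
      have hexF : ex k j = false := by
        simp only [hex]; rw [if_neg]; rintro ⟨-, h⟩; exact h hxT
      intro i
      by_cases hi1 : (i:ℕ) = 2*k
      · have hieq : i = ⟨2*k, h2k⟩ := Fin.ext hi1
        subst hieq
        by_cases hfull : 2*k+1 < d
        · have hcore := core_full (hmM ⟨2*k, h2k⟩) (hmM ⟨2*k+1, hfull⟩)
            (ex k 0) (ex k 1) (ex k 2)
          rw [hI1 k h2k, lpt_at1 m M k j h2k]
          interval_cases j
          · rw [if_pos rfl]; exact (hcore.1.mpr hexF).1
          · rw [if_neg (by omega : ¬ (1 = 0)), if_pos rfl]; exact (hcore.2.1.mpr hexF).1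
          · rw [if_neg (by omega : ¬ (2 = 0)), if_neg (by omega : ¬ (2 = 1))]
            exact (hcore.2.2.mpr hexF).1
        · have hj0 : j = 0 := by omega
          subst hj0
          have he1 : ex k 1 = false := by
            simp only [hex]; rw [if_neg]; rintro ⟨h, -⟩; omega
          have he2 : ex k 2 = false := by
            simp only [hex]; rw [if_neg]; rintro ⟨h, -⟩; omega
          rw [hI1 k h2k, lpt_at1 m M k 0 h2k, if_pos rfl, he1, he2]
          exact (core_half (hmM ⟨2*k, h2k⟩) (ex k 0)).mpr hexF
      · by_cases hi2 : (i:ℕ) = 2*k+1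
        · have hfull : 2*k+1 < d := by rw [← hi2]; exact i.isLt
          have hieq : i = ⟨2*k+1, hfull⟩ := Fin.ext hi2
          subst hieq
          have hcore := core_full (hmM ⟨2*k, h2k⟩) (hmM ⟨2*k+1, hfull⟩)
            (ex k 0) (ex k 1) (ex k 2)
          rw [hI2 k hfull, lpt_at2 m M k j hfull]
          interval_cases j
          · rw [if_neg (by omega : ¬ (0 = 2))]; exact (hcore.1.mpr hexF).2
          · rw [if_neg (by omega : ¬ (1 = 2))]; exact (hcore.2.1.mpr hexF).2
          · rw [if_pos rfl]; exact (hcore.2.2.mpr hexF).2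
        · rw [lpt_other m M k j i hi1 hi2]
          exact hIcc i (m i) le_rfl (hmM i)


end VCaux

/-- Theorem A: for every `d ≥ 1` and every nonempty bounded `F ⊆ ℝ^d`, the VC dimension
of the family of closed degenerate balls in `ℓ∞^d` containing `F` equals `⌊3d/2⌋`. -/
theorem vcDim_DdF (d : ℕ) (hd : 1 ≤ d) (F : Set (Fin d → ℝ))
    (hF : F.Nonempty) (hFb : Bornology.IsBounded F) :
    vcDim (DdF d F) = ((3 * d / 2 : ℕ) : ℕ∞) := by
  classical
  obtain ⟨y₀, hy₀⟩ := hF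
  apply le_antisymm
  · refine iSup_le fun σ => iSup_le fun hsh => ?_
    have h := VCaux.count_main hy₀ hsh
    have h2 : σ.card ≤ 3 * d / 2 := by omega
    exact_mod_cast h2
  · obtain ⟨R, hR⟩ := isBounded_iff_forall_norm_le.mp hFb
    set m : Fin d → ℝ := fun i => sInf ((fun x => x i) '' F) with hm
    set M : Fin d → ℝ := fun i => sSup ((fun x => x i) '' F) with hM
    have habs : ∀ x ∈ F, ∀ i : Fin d, |x i| ≤ R := by
      intro x hx i
      have h1 : ‖x i‖ ≤ ‖x‖ := norm_le_pi_norm x i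
      have h2 := hR x hx
      calc |x i| = ‖x i‖ := (Real.norm_eq_abs _).symm
        _ ≤ R := le_trans h1 h2
    have hbb : ∀ i, BddBelow ((fun x : Fin d → ℝ => x i) '' F) := by
      intro i
      refine ⟨-R, ?_⟩
      rintro v ⟨x, hx, rfl⟩
      have := abs_le.mp (habs x hx i)
      linarith [this.1]
    have hba : ∀ i, BddAbove ((fun x : Fin d → ℝ => x i) '' F) := by
      intro i
      refine ⟨R, ?_⟩
      rintro v ⟨x, hx, rfl⟩
      exact (abs_le.mp (habs x hx i)).2
    have hf1 : ∀ y ∈ F, ∀ i, m i ≤ y i := fun y hy i => csInf_le (hbb i) ⟨y, hy, rfl⟩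
    have hf2 : ∀ y ∈ F, ∀ i, y i ≤ M i := fun y hy i => le_csSup (hba i) ⟨y, hy, rfl⟩
    have hmM : ∀ i, m i ≤ M i := fun i => le_trans (hf1 y₀ hy₀ i) (hf2 y₀ hy₀ i)
    have hsh := VCaux.lb_shatters m M F hf1 hf2 hmM
    have hcard : ((VCaux.lK d).image
        (fun kj : ℕ × ℕ => VCaux.lpt m M kj.1 kj.2)).card = 3 * d / 2 := by
      rw [Finset.card_image_of_injOn (VCaux.lpt_injOn m M hmM), VCaux.lK_card]
    calc ((3 * d / 2 : ℕ) : ℕ∞)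
        = ((((VCaux.lK d).image (fun kj : ℕ × ℕ => VCaux.lpt m M kj.1 kj.2)).card : ℕ)
            : ℕ∞) := by rw [hcard]
      _ ≤ vcDim (DdF d F) := le_iSup₂ (f := fun (σ : Finset (Fin d → ℝ))
            (_ : Shatters (DdF d F) ↑σ) => (σ.card : ℕ∞)) _ hsh
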